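/- If a Banach space X has the L-Dunford-Pettis property, then for every Banach space Y, every Dunford-Pettis completely continuous operator T: X → Y is weakly compact. -/

import Mathlib

open Filter Topology Metric

noncomputable section

instance : Fact ((1:ENNReal) ≤ ⊤) := ⟨le_top⟩

/-- A sequence is weakly null if every continuous linear functional sends it to a null
sequence. -/
def WeaklyNull {X : Type*} [NormedAddCommGroup X] [NormedSpace ℝ X] (x : ℕ → X) : Prop :=
  ∀ f : X →L[ℝ] ℝ, Tendsto (fun n => f (x n)) atTop (𝓝 0)

/-- A sequence of functionals is weak*-null if it tends to zero pointwise. -/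
def WeakStarNull {X : Type*} [NormedAddCommGroup X] [NormedSpace ℝ X]
    (f : ℕ → X →L[ℝ] ℝ) : Prop :=
  ∀ x : X, Tendsto (fun n => f n x) atTop (𝓝 0)

/-- A norm bounded set is a Dunford-Pettis set if every weakly null sequence of functionals
converges to zero uniformly on it. -/
def IsDPSet {X : Type*} [NormedAddCommGroup X] [NormedSpace ℝ X] (A : Set X) : Prop :=
  Bornology.IsBounded A ∧
  ∀ f : ℕ → X →L[ℝ] ℝ, WeaklyNull f →
    Tendsto (fun n => ⨆ x : A, |f n (x : X)|) atTop (𝓝 0)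

/-- A norm bounded subset of the dual is an L-set if every weakly null sequence in `X`
converges to zero uniformly on it. -/
def IsLSet {X : Type*} [NormedAddCommGroup X] [NormedSpace ℝ X]
    (A : Set (X →L[ℝ] ℝ)) : Prop :=
  Bornology.IsBounded A ∧
  ∀ x : ℕ → X, WeaklyNull x →
    Tendsto (fun n => ⨆ f : A, |(f : X →L[ℝ] ℝ) (x n)|) atTop (𝓝 0)

/-- A norm bounded subset of the dual is an L-Dunford-Pettis set if every weakly null
sequence in `X` which is a Dunford-Pettis set converges to zero uniformly on it. -/
def IsLDPSet {X : Type*} [NormedAddCommGroup X] [NormedSpace ℝ X]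
    (A : Set (X →L[ℝ] ℝ)) : Prop :=
  Bornology.IsBounded A ∧
  ∀ x : ℕ → X, WeaklyNull x → IsDPSet (Set.range x) →
    Tendsto (fun n => ⨆ f : A, |(f : X →L[ℝ] ℝ) (x n)|) atTop (𝓝 0)

/-- A set is relatively weakly compact if its closure in the weak topology is compact. -/
def RelWeaklyCompact {X : Type*} [NormedAddCommGroup X] [NormedSpace ℝ X]
    (A : Set X) : Prop :=
  IsCompact (closure ((toWeakSpace ℝ X) '' A))

/-- The relatively compact Dunford-Pettis property: every Dunford-Pettis set is
relatively norm compact. -/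
def HasDPrcP (X : Type*) [NormedAddCommGroup X] [NormedSpace ℝ X] : Prop :=
  ∀ A : Set X, IsDPSet A → IsCompact (closure A)

/-- An operator is Dunford-Pettis completely continuous if it maps weakly null sequences
that are Dunford-Pettis sets to norm null sequences. -/
def IsDPcc {X Y : Type*} [NormedAddCommGroup X] [NormedSpace ℝ X]
    [NormedAddCommGroup Y] [NormedSpace ℝ Y] (T : X →L[ℝ] Y) : Prop :=
  ∀ x : ℕ → X, WeaklyNull x → IsDPSet (Set.range x) →
    Tendsto (fun n => ‖T (x n)‖) atTop (𝓝 0)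

/-- An operator is weakly compact if the image of the closed unit ball is relatively
weakly compact. -/
def IsWeaklyCompactOp {X Y : Type*} [NormedAddCommGroup X] [NormedSpace ℝ X]
    [NormedAddCommGroup Y] [NormedSpace ℝ Y] (T : X →L[ℝ] Y) : Prop :=
  RelWeaklyCompact (T '' closedBall 0 1)

/-- The L-Dunford-Pettis property: every L-Dunford-Pettis set in the dual is relatively
weakly compact. -/
def HasLDPProperty (X : Type*) [NormedAddCommGroup X] [NormedSpace ℝ X] : Prop :=
  ∀ A : Set (X →L[ℝ] ℝ), IsLDPSet A → RelWeaklyCompact A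

/-- The Dunford-Pettis property: every relatively weakly compact set is a
Dunford-Pettis set. -/
def HasDPProperty (X : Type*) [NormedAddCommGroup X] [NormedSpace ℝ X] : Prop :=
  ∀ A : Set X, RelWeaklyCompact A → IsDPSet A

/-- Grothendieck space: every weak*-null sequence in the dual is weakly null. -/
def IsGrothendieck (X : Type*) [NormedAddCommGroup X] [NormedSpace ℝ X] : Prop :=
  ∀ f : ℕ → X →L[ℝ] ℝ, WeakStarNull f → WeaklyNull f

/-- The space `ℓ∞` of bounded real sequences. -/
abbrev ellInfty : Type := lp (fun _ : ℕ => ℝ) ⊤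

section AuxLDP

open NormedSpace Set

abbrev DD (E : Type*) [NormedAddCommGroup E] [NormedSpace ℝ E] := StrongDual ℝ (StrongDual ℝ E)

def jWD (E : Type*) [NormedAddCommGroup E] [NormedSpace ℝ E] :
    E → WeakDual ℝ (StrongDual ℝ E) :=
  fun x => StrongDual.toWeakDual (NormedSpace.inclusionInDoubleDual ℝ E x)

@[simp] lemma jWD_apply {E : Type*} [NormedAddCommGroup E] [NormedSpace ℝ E]
    (x : E) (f : StrongDual ℝ E) : jWD E x f = f x := rfl

lemma continuous_jWD_weak {E : Type*} [NormedAddCommGroup E] [NormedSpace ℝ E] :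
    Continuous fun y : WeakSpace ℝ E => jWD E y :=
  WeakDual.continuous_of_continuous_eval fun f => WeakBilin.eval_continuous _ f

lemma isInducing_jWD {E : Type*} [NormedAddCommGroup E] [NormedSpace ℝ E] :
    Topology.IsInducing fun y : WeakSpace ℝ E => jWD E y := by
  constructor
  show _ = TopologicalSpace.induced _ (WeakBilin.instTopologicalSpace _)
  rw [show (WeakBilin.instTopologicalSpace (topDualPairing ℝ (StrongDual ℝ E))) =
      TopologicalSpace.induced (fun (ψ : WeakDual ℝ (StrongDual ℝ E)) (f : StrongDual ℝ E) => ψ f)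
        Pi.topologicalSpace from rfl]
  refine Eq.trans ?_ induced_compose.symm
  rfl

lemma isCompact_closure_weakDual {G : Type*} [NormedAddCommGroup G] [NormedSpace ℝ G]
    {S : Set (WeakDual ℝ G)} {r : ℝ} (h : ∀ ψ ∈ S, ‖WeakDual.toStrongDual ψ‖ ≤ r) :
    IsCompact (closure S) := by
  have hsub : S ⊆ WeakDual.toStrongDual ⁻¹' Metric.closedBall 0 r := by
    intro ψ hψ
    simpa [mem_closedBall_zero_iff] using h ψ hψ
  exact (WeakDual.isCompact_closedBall (0 : StrongDual ℝ G) r).of_isClosed_subset isClosed_closure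
    (closure_minimal hsub (WeakDual.isClosed_closedBall 0 r))

lemma isClosed_weak_of_convex {F : Type*} [NormedAddCommGroup F] [NormedSpace ℝ F]
    {s : Set F} (hconv : Convex ℝ s) (hs : IsClosed s) :
    IsClosed {y : WeakSpace ℝ F | ((toWeakSpace ℝ F).symm y : F) ∈ s} := by
  rw [← isOpen_compl_iff, isOpen_iff_forall_mem_open]
  intro y hy
  obtain ⟨f, u, hfs, hfy⟩ := geometric_hahn_banach_closed_point hconv hs hy
  refine ⟨{z : WeakSpace ℝ F | u < f ((toWeakSpace ℝ F).symm z)}, ?_, ?_, hfy⟩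
  · intro z hz hz'
    exact absurd hz (not_lt.2 (hfs _ hz').le)
  · exact isOpen_lt continuous_const (WeakBilin.eval_continuous ((topDualPairing ℝ F).flip) f)

lemma helly {E : Type*} [NormedAddCommGroup E] [NormedSpace ℝ E]
    (Φ : StrongDual ℝ (StrongDual ℝ E)) (hΦ : ‖Φ‖ ≤ 1) (I : Finset (StrongDual ℝ E)) {ε : ℝ} (hε : 0 < ε) :
    ∃ x : E, ‖x‖ ≤ 1 ∧ ∀ f ∈ I, |f x - Φ f| < ε := by
  classical
  set P : E →L[ℝ] (↥I → ℝ) := ContinuousLinearMap.pi (fun i : ↥I => (i : StrongDual ℝ E)) with hP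
  set v : ↥I → ℝ := fun i => Φ (i : StrongDual ℝ E) with hv
  by_cases hvq : v ∈ closure (P '' Metric.closedBall 0 1)
  · obtain ⟨b, hbQ, hdist⟩ := Metric.mem_closure_iff.1 hvq ε hε
    obtain ⟨x, hx, rfl⟩ := hbQ
    refine ⟨x, mem_closedBall_zero_iff.1 hx, fun f hf => ?_⟩
    have h1 : dist (v ⟨f, hf⟩) (P x ⟨f, hf⟩) ≤ dist v (P x) := dist_le_pi_dist v (P x) ⟨f, hf⟩
    have h2 : P x ⟨f, hf⟩ = f x := by simp [hP]
    have h3 : v ⟨f, hf⟩ = Φ f := rfl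
    rw [h2, h3, Real.dist_eq] at h1
    calc |f x - Φ f| = |Φ f - f x| := abs_sub_comm _ _
      _ ≤ dist v (P x) := h1
      _ < ε := hdist
  · exfalso
    obtain ⟨l, u, hlQ, hlv⟩ := geometric_hahn_banach_closed_point
      (((convex_closedBall (0:E) 1).linear_image (P : E →ₗ[ℝ] (↥I → ℝ))).closure)
      isClosed_closure hvq
    set δ : ↥I → (↥I → ℝ) := fun i => fun j => if i = j then (1:ℝ) else 0 with hδ
    have hdec : ∀ w : ↥I → ℝ, l w = ∑ i, w i * l (δ i) := by
      intro w
      conv_lhs => rw [pi_eq_sum_univ w]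
      rw [map_sum]
      simp [smul_eq_mul]
      rfl
    set F0 : StrongDual ℝ E := ∑ i : ↥I, l (δ i) • (i : StrongDual ℝ E) with hF0
    have hFx : ∀ x : E, F0 x = l (P x) := by
      intro x
      rw [hdec (P x)]
      rw [hF0]
      rw [ContinuousLinearMap.sum_apply]
      refine Finset.sum_congr rfl fun i _ => ?_
      simp [hP, mul_comm]
    have hub : ∀ x ∈ Metric.closedBall (0:E) 1, F0 x < u := by
      intro x hx
      rw [hFx]
      exact hlQ _ (subset_closure (mem_image_of_mem _ hx))
    have hu0 : 0 < u := by
      have := hub 0 (Metric.mem_closedBall_self zero_le_one)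
      simpa using this
    have hnorm : ‖F0‖ ≤ u := by
      refine F0.opNorm_le_bound hu0.le fun x => ?_
      rcases eq_or_ne x 0 with rfl | hx0
      · simp [hu0.le]
      · have hxn : (0:ℝ) < ‖x‖ := norm_pos_iff.2 hx0
        set y := ‖x‖⁻¹ • x with hy
        have hyb : y ∈ Metric.closedBall (0:E) 1 := by
          rw [mem_closedBall_zero_iff, hy, norm_smul, norm_inv, norm_norm,
            inv_mul_cancel₀ hxn.ne']
        have hyb' : -y ∈ Metric.closedBall (0:E) 1 := by
          rwa [mem_closedBall_zero_iff, norm_neg, ← mem_closedBall_zero_iff]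
        have h1 : F0 y < u := hub y hyb
        have h2 : -(F0 y) < u := by
          have := hub (-y) hyb'
          rwa [map_neg] at this
        have habs : |F0 y| ≤ u := abs_le.2 ⟨by linarith, h1.le⟩
        have hFy : F0 y = ‖x‖⁻¹ * F0 x := by rw [hy, map_smul, smul_eq_mul]
        rw [hFy, abs_mul, abs_inv, abs_norm] at habs
        rw [Real.norm_eq_abs]
        calc |F0 x| = ‖x‖ * (‖x‖⁻¹ * |F0 x|) := by field_simp
          _ ≤ ‖x‖ * u := by
            exact mul_le_mul_of_nonneg_left habs (norm_nonneg x)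
          _ = u * ‖x‖ := mul_comm _ _
    have hlveq : l v = Φ F0 := by
      rw [hdec v, hF0, map_sum]
      refine Finset.sum_congr rfl fun i _ => ?_
      rw [map_smul, smul_eq_mul, hv, mul_comm]
    have : l v ≤ u := by
      rw [hlveq]
      calc Φ F0 ≤ |Φ F0| := le_abs_self _
        _ = ‖Φ F0‖ := (Real.norm_eq_abs _).symm
        _ ≤ ‖Φ‖ * ‖F0‖ := Φ.le_opNorm F0
        _ ≤ 1 * u := mul_le_mul hΦ hnorm (norm_nonneg _) zero_le_one
        _ = u := one_mul u
    linarith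

lemma goldstine {E : Type*} [NormedAddCommGroup E] [NormedSpace ℝ E]
    (Φ : StrongDual ℝ (StrongDual ℝ E)) (hΦ : ‖Φ‖ ≤ 1) :
    StrongDual.toWeakDual Φ ∈ closure (jWD E '' Metric.closedBall 0 1) := by
  classical
  have hinj : Function.Injective ⇑(topDualPairing ℝ (StrongDual ℝ E)) := by
    intro v w h
    ext x
    exact DFunLike.congr_fun h x
  have hemb : IsEmbedding (X := WeakDual ℝ (StrongDual ℝ E)) _ :=
    WeakBilin.isEmbedding (B := topDualPairing ℝ (StrongDual ℝ E)) hinj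
  rw [hemb.toIsInducing.closure_eq_preimage_closure_image]
  refine Set.mem_preimage.2 ?_
  rw [mem_closure_iff_nhds]
  intro U hU
  rw [nhds_pi] at hU
  obtain ⟨I, t, htmem, hsub⟩ := Filter.mem_pi'.1 hU
  choose εf hεf hball using fun f : StrongDual ℝ E => Metric.mem_nhds_iff.1 (htmem f)
  rcases I.eq_empty_or_nonempty with rfl | hne
  · refine ⟨fun f => (jWD E 0) f, hsub fun f hf => absurd hf (by simp), ?_⟩
    exact ⟨jWD E 0, mem_image_of_mem _ (Metric.mem_closedBall_self zero_le_one), rfl⟩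
  · set εm := I.inf' hne εf with hεm
    have hεm0 : 0 < εm := (Finset.lt_inf'_iff hne).2 fun f _ => hεf f
    obtain ⟨x, hx1, hx2⟩ := helly Φ hΦ I hεm0
    refine ⟨fun f => (jWD E x) f, hsub ?_, ⟨jWD E x, mem_image_of_mem _ (mem_closedBall_zero_iff.2 hx1), rfl⟩⟩
    intro f hf
    apply hball f
    rw [Metric.mem_ball, Real.dist_eq]
    calc |f x - Φ f| < εm := hx2 f hf
      _ ≤ εf f := Finset.inf'_le _ hf

end AuxLDP

open NormedSpace Set in
set_option maxHeartbeats 2000000 in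
theorem stmt8 {X : Type*} [NormedAddCommGroup X] [NormedSpace ℝ X] [CompleteSpace X]
    (hX : HasLDPProperty X) :
    ∀ (Y : Type) [NormedAddCommGroup Y] [NormedSpace ℝ Y] [CompleteSpace Y],
      ∀ T : X →L[ℝ] Y, IsDPcc T → IsWeaklyCompactOp T := by
  intro Y _ _ _ T hT
  classical
  -- Step 1: the adjoint image of the dual unit ball is an L-DP set
  set A : Set (StrongDual ℝ X) := (fun g : StrongDual ℝ Y => g.comp T) '' Metric.closedBall 0 1 with hA
  have hALDP : IsLDPSet A := by
    constructor
    · refine (Metric.isBounded_closedBall (x := (0 : StrongDual ℝ X)) (r := ‖T‖)).subset ?_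
      rintro _ ⟨g, hg, rfl⟩
      rw [mem_closedBall_zero_iff]
      calc ‖g.comp T‖ ≤ ‖g‖ * ‖T‖ := g.opNorm_comp_le T
        _ ≤ 1 * ‖T‖ := by
          exact mul_le_mul_of_nonneg_right (mem_closedBall_zero_iff.1 hg) (norm_nonneg T)
        _ = ‖T‖ := one_mul _
    · intro x hwn hdp
      have hTn := hT x hwn hdp
      have hAne : Nonempty ↥A :=
        ⟨⟨(0 : StrongDual ℝ Y).comp T, ⟨0, Metric.mem_closedBall_self zero_le_one, rfl⟩⟩⟩
      refine squeeze_zero (fun n => Real.iSup_nonneg fun f => abs_nonneg _) (fun n => ?_) hTn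
      refine ciSup_le fun f => ?_
      obtain ⟨g, hg, hgf⟩ := f.2
      have : (f : StrongDual ℝ X) (x n) = g (T (x n)) := by rw [← hgf]; rfl
      rw [this]
      calc |g (T (x n))| ≤ ‖g‖ * ‖T (x n)‖ := by
            simpa [Real.norm_eq_abs] using g.le_opNorm (T (x n))
        _ ≤ 1 * ‖T (x n)‖ :=
            mul_le_mul_of_nonneg_right (mem_closedBall_zero_iff.1 hg) (norm_nonneg _)
        _ = ‖T (x n)‖ := one_mul _
  -- Step 2: relative weak compactness of A
  have hWc : IsCompact (closure ((toWeakSpace ℝ (StrongDual ℝ X)) '' A)) := hX A hALDP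
  set W' := closure ((toWeakSpace ℝ (StrongDual ℝ X)) '' A) with hW'
  set K : Set (WeakDual ℝ (StrongDual ℝ (StrongDual ℝ X))) :=
    (fun w : WeakSpace ℝ (StrongDual ℝ X) => jWD (StrongDual ℝ X) w) '' W' with hK
  have hKc : IsCompact K := hWc.image continuous_jWD_weak
  have hKcl : IsClosed K := hKc.isClosed
  -- the adjoint
  set Tt : StrongDual ℝ Y →L[ℝ] StrongDual ℝ X := (ContinuousLinearMap.compL ℝ X Y ℝ).flip T with hTt
  have hTtapp : ∀ (g : StrongDual ℝ Y) (z : X), Tt g z = g (T z) := fun g z => rfl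
  -- Step 3: key lemma, T''' maps Y''' into J(X')
  have key : ∀ Φ : DD (StrongDual ℝ Y), ∃ h : StrongDual ℝ X,
      ∀ x'' : StrongDual ℝ (StrongDual ℝ X), x'' h = Φ (x''.comp Tt) := by
    have key1 : ∀ Φ : DD (StrongDual ℝ Y), ‖Φ‖ ≤ 1 → ∃ h : StrongDual ℝ X,
        ∀ x'' : StrongDual ℝ (StrongDual ℝ X), x'' h = Φ (x''.comp Tt) := by
      intro Φ hΦ
      have hgold := goldstine Φ hΦ
      set Sd : WeakDual ℝ (StrongDual ℝ (StrongDual ℝ Y)) → WeakDual ℝ (StrongDual ℝ (StrongDual ℝ X)) :=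
        fun ψ => StrongDual.toWeakDual ((WeakDual.toStrongDual ψ).comp
          ((ContinuousLinearMap.compL ℝ (StrongDual ℝ Y) (StrongDual ℝ X) ℝ).flip Tt)) with hSd
      have hSdc : Continuous Sd :=
        WeakDual.continuous_of_continuous_eval fun x'' => WeakDual.eval_continuous _
      have himg : Sd (StrongDual.toWeakDual Φ) ∈
          closure (Sd '' (jWD (StrongDual ℝ Y) '' Metric.closedBall 0 1)) :=
        (image_closure_subset_closure_image hSdc) (mem_image_of_mem _ hgold)
      have him2 : Sd '' (jWD (StrongDual ℝ Y) '' Metric.closedBall 0 1) ⊆ K := by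
        rintro _ ⟨_, ⟨g, hg, rfl⟩, rfl⟩
        have heq : Sd (jWD (StrongDual ℝ Y) g) = jWD (StrongDual ℝ X) (Tt g) := DFunLike.ext _ _ fun x'' => rfl
        rw [heq]
        exact ⟨toWeakSpace ℝ (StrongDual ℝ X) (Tt g),
          subset_closure (mem_image_of_mem _ ⟨g, hg, rfl⟩), rfl⟩
      have hmem : Sd (StrongDual.toWeakDual Φ) ∈ K := closure_minimal him2 hKcl himg
      obtain ⟨w, _, heq⟩ := hmem
      refine ⟨(toWeakSpace ℝ (StrongDual ℝ X)).symm w, fun x'' => ?_⟩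
      have := DFunLike.congr_fun heq x''
      exact this
    intro Φ
    set c : ℝ := max ‖Φ‖ 1 with hc
    have hc0 : (0:ℝ) < c := lt_max_of_lt_right zero_lt_one
    obtain ⟨h, hh⟩ := key1 (c⁻¹ • Φ) (by
      rw [show ‖c⁻¹ • Φ‖ = ‖c⁻¹‖ * ‖Φ‖ from by
          exact @norm_smul _ _ _ _ _ NormedSpace.toNormSMulClass c⁻¹ Φ,
        Real.norm_eq_abs, abs_inv, abs_of_pos hc0]
      calc c⁻¹ * ‖Φ‖ ≤ c⁻¹ * c :=
            mul_le_mul_of_nonneg_left (le_max_left _ _) (inv_nonneg.2 hc0.le)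
        _ = 1 := inv_mul_cancel₀ hc0.ne')
    refine ⟨c • h, fun x'' => ?_⟩
    calc x'' (c • h) = c * x'' h := by rw [map_smul, smul_eq_mul]
      _ = c * ((c⁻¹ • Φ) (x''.comp Tt)) := by rw [hh]
      _ = Φ (x''.comp Tt) := by
          rw [ContinuousLinearMap.smul_apply, smul_eq_mul]
          field_simp
  -- Step 4: the weak-star compact superset of J(T(B_X))
  show IsCompact (closure ((toWeakSpace ℝ Y) '' (T '' Metric.closedBall 0 1)))
  set Cset := closure ((fun y : Y => jWD Y y) '' (T '' Metric.closedBall 0 1)) with hCset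
  have hCc : IsCompact Cset := by
    refine isCompact_closure_weakDual (r := ‖T‖) ?_
    rintro _ ⟨_, ⟨z, hz, rfl⟩, rfl⟩
    rw [show ‖WeakDual.toStrongDual (jWD Y (T z))‖ = ‖T z‖ from
      (inclusionInDoubleDualLi ℝ (E := Y)).norm_map (T z)]
    calc ‖T z‖ ≤ ‖T‖ * ‖z‖ := T.le_opNorm z
      _ ≤ ‖T‖ * 1 := mul_le_mul_of_nonneg_left (mem_closedBall_zero_iff.1 hz) (norm_nonneg T)
      _ = ‖T‖ := mul_one _
  set D := closure ((fun z : X => jWD X z) '' Metric.closedBall 0 1) with hD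
  have hDc : IsCompact D := by
    refine isCompact_closure_weakDual (r := 1) ?_
    rintro _ ⟨z, hz, rfl⟩
    rw [show ‖WeakDual.toStrongDual (jWD X z)‖ = ‖z‖ from
      (inclusionInDoubleDualLi ℝ (E := X)).norm_map z]
    exact mem_closedBall_zero_iff.1 hz
  set Tdd : WeakDual ℝ (StrongDual ℝ X) → WeakDual ℝ (StrongDual ℝ Y) :=
    fun φ => StrongDual.toWeakDual ((WeakDual.toStrongDual φ).comp Tt) with hTdd
  have hTddc : Continuous Tdd :=
    WeakDual.continuous_of_continuous_eval fun g => WeakDual.eval_continuous (Tt g)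
  have hTdd_j : ∀ z : X, Tdd (jWD X z) = jWD Y (T z) := fun z => DFunLike.ext _ _ fun g => rfl
  have hCsub : Cset ⊆ Tdd '' D := by
    refine closure_minimal ?_ (hDc.image hTddc).isClosed
    rintro _ ⟨_, ⟨z, hz, rfl⟩, rfl⟩
    exact ⟨jWD X z, subset_closure (mem_image_of_mem _ hz), hTdd_j z⟩
  -- Step 5: Tdd(D) lands inside J(Y), via the weak topology of Y'' and Mazur
  have hrange : Tdd '' D ⊆ Set.range (fun y : Y => jWD Y y) := by
    set Tddw : WeakDual ℝ (StrongDual ℝ X) → WeakSpace ℝ (StrongDual ℝ (StrongDual ℝ Y)) :=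
      fun φ => toWeakSpace ℝ _ ((WeakDual.toStrongDual φ).comp Tt) with hTddw
    have hTddwc : Continuous Tddw := by
      refine WeakBilin.continuous_of_continuous_eval _ fun Φ => ?_
      obtain ⟨h, hh⟩ := key Φ
      have hfe : (fun φ : WeakDual ℝ (StrongDual ℝ X) =>
          (topDualPairing ℝ (StrongDual ℝ (StrongDual ℝ Y))).flip (Tddw φ) Φ) = fun φ => φ h := by
        funext φ
        exact (hh (WeakDual.toStrongDual φ)).symm
      rw [hfe]
      exact WeakDual.eval_continuous h
    have hJiso : Isometry (fun y : Y => NormedSpace.inclusionInDoubleDual ℝ Y y) :=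
      (inclusionInDoubleDualLi ℝ (E := Y)).isometry
    have hJcl : IsClosed (Set.range (fun y : Y => NormedSpace.inclusionInDoubleDual ℝ Y y)) :=
      hJiso.isClosedEmbedding.isClosed_range
    have hconv : Convex ℝ (Set.range (fun y : Y => NormedSpace.inclusionInDoubleDual ℝ Y y)) := by
      exact (LinearMap.range ((inclusionInDoubleDual ℝ Y : Y →L[ℝ] StrongDual ℝ (StrongDual ℝ Y)) :
        Y →ₗ[ℝ] StrongDual ℝ (StrongDual ℝ Y))).convex
    have hclosedW := isClosed_weak_of_convex (F := StrongDual ℝ (StrongDual ℝ Y)) hconv (by exact hJcl)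
    rintro _ ⟨φ, hφ, rfl⟩
    have h1 : Tddw φ ∈ closure (Tddw '' ((fun z : X => jWD X z) '' Metric.closedBall 0 1)) :=
      image_closure_subset_closure_image hTddwc (mem_image_of_mem _ hφ)
    have h2 : closure (Tddw '' ((fun z : X => jWD X z) '' Metric.closedBall 0 1)) ⊆
        {w : WeakSpace ℝ (StrongDual ℝ (StrongDual ℝ Y)) |
          ((toWeakSpace ℝ (StrongDual ℝ (StrongDual ℝ Y))).symm w : StrongDual ℝ (StrongDual ℝ Y)) ∈
            Set.range (fun y : Y => NormedSpace.inclusionInDoubleDual ℝ Y y)} := by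
      refine closure_minimal ?_ hclosedW
      rintro _ ⟨_, ⟨z, hz, rfl⟩, rfl⟩
      refine ⟨T z, ?_⟩
      ext g
      rfl
    obtain ⟨y, hy⟩ := h2 h1
    exact ⟨y, by
      show jWD Y y = Tdd φ
      exact congrArg (StrongDual.toWeakDual) hy⟩
  -- Step 6: pull back compactness along the weak embedding
  have hCrange : Cset ⊆ Set.range (fun y : WeakSpace ℝ Y => jWD Y y) := hCsub.trans hrange
  have hpre : IsCompact ((fun y : WeakSpace ℝ Y => jWD Y y) ⁻¹' Cset) :=
    isInducing_jWD.isCompact_preimage' hCc hCrange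
  refine hpre.of_isClosed_subset isClosed_closure ?_
  refine closure_minimal ?_ (isClosed_closure.preimage continuous_jWD_weak)
  rintro _ ⟨_, ⟨z, hz, rfl⟩, rfl⟩
  exact subset_closure (mem_image_of_mem _ (mem_image_of_mem _ hz))
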